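/- arXiv:1608.08871 — 2 statements merged into one kernel-verified Lean document; each statement's English description precedes it below -/
import Mathlib

section
/- Let d ≥ 1, x₀ ∈ E = EuclideanSpace ℝ (Fin d), C_ε > 0, let A : E → ℝ be continuously differentiable and φ : E → ℝ twice continuously differentiable on B = closedBall(x₀, C_ε), with ∇φ(x₀) ≠ 0. Set C₁ := sup_B ‖∇A‖, C₂ := sup_B |A|, C₃ := sup_B ‖∇²φ‖, η₀ := ‖∇φ(x₀)‖, and define u, u₀, δu, δU as follows: u(x) = A(x)e^{iωφ(x)}, u₀(x) = A(x₀)e^{iω(φ(x₀)+⟨∇φ(x₀), x−x₀⟩)}, δu = u − u₀, and δU(x) = (1/(iωη₀))·D_ŝ(δu)(x) + δu(x) for a unit vector ŝ. Then for every ω ≥ 1, setting r := C_ε·ω^{-1/2}, for every unit vector ŝ and x = x₀ + r ŝ, |δU(x)| ≤ C_ε² C₂ C₃ + ( C₁/η₀ + 2 C_ε C₁ + C_ε C₂ C₃/η₀ )·ω^{-1/2}. -/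
open Complex Metric
open scoped InnerProductSpace BigOperators

section helpers

lemma exp_mul_I_sub_one_le (θ : ℝ) : ‖Complex.exp (θ * Complex.I) - 1‖ ≤ |θ| := by
  have h : Complex.exp (θ * Complex.I) - 1 =
      Complex.ofReal (Real.cos θ - 1) + Complex.ofReal (Real.sin θ) * Complex.I := by
    rw [Complex.exp_mul_I]
    push_cast
    ring
  have hsq : ‖Complex.exp (θ * Complex.I) - 1‖ ^ 2 = 2 - 2 * Real.cos θ := by
    rw [h, ← Complex.normSq_eq_norm_sq, Complex.normSq_apply]
    simp only [Complex.add_re, Complex.add_im, Complex.ofReal_re, Complex.ofReal_im,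
      Complex.mul_re, Complex.mul_im, Complex.I_re, Complex.I_im]
    nlinarith [Real.sin_sq_add_cos_sq θ]
  have hcos := Real.one_sub_sq_div_two_le_cos (x := θ)
  have h0 : (0:ℝ) ≤ ‖Complex.exp (θ * Complex.I) - 1‖ := norm_nonneg _
  nlinarith [abs_nonneg θ, _root_.sq_abs θ]

lemma exp_I_omega_sub (ω a b : ℝ) (hω : 0 ≤ ω) :
    ‖Complex.exp (Complex.I * ω * a) - Complex.exp (Complex.I * ω * b)‖ ≤ ω * |a - b| := by
  have h1 : Complex.exp (Complex.I * ω * a) - Complex.exp (Complex.I * ω * b)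
      = Complex.exp ((b * ω : ℝ) * Complex.I) * (Complex.exp (((a - b) * ω : ℝ) * Complex.I) - 1) := by
    rw [mul_sub, ← Complex.exp_add]
    push_cast
    ring_nf
  rw [h1, norm_mul, Complex.norm_exp_ofReal_mul_I, one_mul]
  calc ‖Complex.exp (((a - b) * ω : ℝ) * Complex.I) - 1‖ ≤ |(a - b) * ω| :=
        exp_mul_I_sub_one_le _
    _ = ω * |a - b| := by rw [abs_mul, _root_.abs_of_nonneg hω]; ring

lemma taylor_half_aux {d : ℕ} (x₀ : EuclideanSpace ℝ (Fin d)) {Cε : ℝ}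
    (φ : EuclideanSpace ℝ (Fin d) → ℝ) (hφ : ContDiffOn ℝ 2 φ (closedBall x₀ Cε))
    {C₃ : ℝ}
    (hlip : ∀ y ∈ closedBall x₀ Cε,
      ‖fderivWithin ℝ φ (closedBall x₀ Cε) y - fderivWithin ℝ φ (closedBall x₀ Cε) x₀‖
        ≤ C₃ * ‖y - x₀‖)
    {r : ℝ} (hr0 : 0 < r) (hrC : r ≤ Cε) (s : EuclideanSpace ℝ (Fin d)) (hs : ‖s‖ = 1) :
    |φ (x₀ + r • s) - φ x₀ - fderivWithin ℝ φ (closedBall x₀ Cε) x₀ (r • s)|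
      ≤ C₃ * r ^ 2 / 2 := by
  set B := closedBall x₀ Cε with hBdef
  set γ : ℝ → EuclideanSpace ℝ (Fin d) := fun t => x₀ + t • (r • s) with hγdef
  have hγs : ∀ t, ‖γ t - x₀‖ = |t| * r := by
    intro t
    simp [hγdef, norm_smul, hs, _root_.abs_of_pos hr0, mul_assoc]
  have hγB : ∀ t ∈ Set.Icc (0:ℝ) 1, γ t ∈ B := by
    intro t ht
    rw [hBdef, mem_closedBall, dist_eq_norm, hγs t, _root_.abs_of_nonneg ht.1]
    nlinarith [ht.2]
  have hφd : DifferentiableOn ℝ φ B := hφ.differentiableOn (by norm_num)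
  set q : ℝ → ℝ := fun t => fderivWithin ℝ φ B (γ t) (r • s) with hqdef
  have hγ0 : γ 0 = x₀ := by simp [hγdef]
  set h : ℝ → ℝ := fun t => φ (γ t) - φ x₀ - t * q 0 with hhdef
  have hγcont : Continuous γ := by continuity
  have hcont : ContinuousOn h (Set.Icc 0 1) := by
    apply ContinuousOn.sub
    · exact ((hφ.continuousOn.comp hγcont.continuousOn hγB).sub continuousOn_const)
    · exact (continuous_id.mul continuous_const).continuousOn
  have hder : ∀ t ∈ Set.Ico (0:ℝ) 1, HasDerivWithinAt h (q t - q 0) (Set.Ici t) t := by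
    intro t ht
    have hγd : HasDerivAt γ (r • s) t := by
      simpa [hγdef] using ((hasDerivAt_id t).smul_const (r • s)).const_add x₀
    have hcomp : HasDerivWithinAt (fun u => φ (γ u)) (q t) (Set.Icc 0 1) t := by
      exact (hφd (γ t) (hγB t ⟨ht.1, ht.2.le⟩)).hasFDerivWithinAt.comp_hasDerivWithinAt t
        hγd.hasDerivWithinAt hγB
    have hcomp' : HasDerivWithinAt (fun u => φ (γ u)) (q t) (Set.Ici t) t :=
      hcomp.mono_of_mem_nhdsWithin (Icc_mem_nhdsGE_of_mem ⟨ht.1, ht.2⟩)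
    have hlin : HasDerivWithinAt (fun u : ℝ => φ x₀ + u * q 0) (q 0) (Set.Ici t) t := by
      simpa using (((hasDerivAt_id t).mul_const (q 0)).const_add (φ x₀)).hasDerivWithinAt
    have heq : h = fun u => φ (γ u) - (φ x₀ + u * q 0) := by
      funext u; simp only [hhdef]; ring
    rw [heq]; exact hcomp'.sub hlin
  have hbound : ∀ t ∈ Set.Ico (0:ℝ) 1, ‖q t - q 0‖ ≤ C₃ * r ^ 2 * t := by
    intro t ht
    have h1 : q t - q 0 =
        (fderivWithin ℝ φ B (γ t) - fderivWithin ℝ φ B x₀) (r • s) := by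
      simp only [hqdef, hγ0, ContinuousLinearMap.sub_apply]
    rw [Real.norm_eq_abs, h1]
    calc |(fderivWithin ℝ φ B (γ t) - fderivWithin ℝ φ B x₀) (r • s)|
        ≤ ‖fderivWithin ℝ φ B (γ t) - fderivWithin ℝ φ B x₀‖ * ‖r • s‖ :=
          (fderivWithin ℝ φ B (γ t) - fderivWithin ℝ φ B x₀).le_opNorm _
      _ ≤ (C₃ * ‖γ t - x₀‖) * ‖r • s‖ := by
          apply mul_le_mul_of_nonneg_right (hlip (γ t) (hγB t ⟨ht.1, ht.2.le⟩)) (norm_nonneg _)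
      _ = C₃ * r ^ 2 * t := by
          rw [hγs t, _root_.abs_of_nonneg ht.1, norm_smul, hs, Real.norm_eq_abs,
            _root_.abs_of_pos hr0]
          ring
  have hBder : ∀ t : ℝ, HasDerivAt (fun u : ℝ => C₃ * r ^ 2 * u ^ 2 / 2) (C₃ * r ^ 2 * t) t := by
    intro t
    have := ((hasDerivAt_pow 2 t).const_mul (C₃ * r ^ 2)).div_const 2
    exact this.congr_deriv (by norm_num; ring)
  have hinit : ‖h 0‖ ≤ C₃ * r ^ 2 * (0:ℝ) ^ 2 / 2 := by
    simp [hhdef, hγ0]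
  have key := image_norm_le_of_norm_deriv_right_le_deriv_boundary hcont hder hinit hBder hbound
    (Set.right_mem_Icc.2 zero_le_one)
  have hγ1 : γ 1 = x₀ + r • s := by simp [hγdef]
  have hq0 : q 0 = fderivWithin ℝ φ (closedBall x₀ Cε) x₀ (r • s) := by simp [hqdef, hγ0, hBdef]
  rw [← hq0]
  simpa [hhdef, hγ1, Real.norm_eq_abs] using key

lemma deriv_eval {d : ℕ} (x₀ : EuclideanSpace ℝ (Fin d)) {Cε : ℝ} (hCε : 0 < Cε)
    (A φ : EuclideanSpace ℝ (Fin d) → ℝ)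
    (hA : ContDiffOn ℝ 1 A (closedBall x₀ Cε)) (hφ : ContDiffOn ℝ 2 φ (closedBall x₀ Cε))
    (g₀ : EuclideanSpace ℝ (Fin d)) (ω : ℝ) (δu : EuclideanSpace ℝ (Fin d) → ℂ)
    (hδu : ∀ y, δu y = (A y : ℂ) * Complex.exp (Complex.I * (ω : ℂ) * (φ y : ℂ))
          - (A x₀ : ℂ) * Complex.exp (Complex.I * (ω : ℂ)
              * ((φ x₀ + ⟪g₀, y - x₀⟫_ℝ : ℝ) : ℂ)))
    (x : EuclideanSpace ℝ (Fin d)) (hx : x ∈ closedBall x₀ Cε)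
    (s : EuclideanSpace ℝ (Fin d)) :
    fderivWithin ℝ δu (closedBall x₀ Cε) x s =
      ((fderivWithin ℝ A (closedBall x₀ Cε) x s : ℝ) : ℂ)
          * Complex.exp (Complex.I * (ω : ℂ) * (φ x : ℂ))
        + (A x : ℂ) * (Complex.I * (ω : ℂ)
              * ((fderivWithin ℝ φ (closedBall x₀ Cε) x s : ℝ) : ℂ))
          * Complex.exp (Complex.I * (ω : ℂ) * (φ x : ℂ))
        - (A x₀ : ℂ) * (Complex.I * (ω : ℂ) * ((⟪g₀, s⟫_ℝ : ℝ) : ℂ))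
          * Complex.exp (Complex.I * (ω : ℂ)
              * ((φ x₀ + ⟪g₀, x - x₀⟫_ℝ : ℝ) : ℂ)) := by
  set B := closedBall x₀ Cε with hBdef
  have hBu : UniqueDiffOn ℝ B := uniqueDiffOn_convex (convex_closedBall _ _)
    (by rw [hBdef, interior_closedBall x₀ (ne_of_gt hCε)]; exact ⟨x₀, mem_ball_self hCε⟩)
  set A' := fderivWithin ℝ A B x with hA'def
  set φ' := fderivWithin ℝ φ B x with hφ'def
  have hA' : HasFDerivWithinAt A A' B x := (hA.differentiableOn one_ne_zero x hx).hasFDerivWithinAt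
  have hφ' : HasFDerivWithinAt φ φ' B x :=
    (hφ.differentiableOn (by norm_num) x hx).hasFDerivWithinAt
  have hAc : HasFDerivWithinAt (fun y => ((A y : ℝ) : ℂ)) (Complex.ofRealCLM.comp A') B x :=
    Complex.ofRealCLM.hasFDerivAt.comp_hasFDerivWithinAt x hA'
  have hφc : HasFDerivWithinAt (fun y => ((φ y : ℝ) : ℂ)) (Complex.ofRealCLM.comp φ') B x :=
    Complex.ofRealCLM.hasFDerivAt.comp_hasFDerivWithinAt x hφ'
  have hw : HasFDerivWithinAt (fun y => Complex.I * (ω : ℂ) * ((φ y : ℝ) : ℂ))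
      ((Complex.I * (ω : ℂ)) • (Complex.ofRealCLM.comp φ')) B x :=
    hφc.const_mul _
  have hexp1 : HasFDerivWithinAt (fun y => Complex.exp (Complex.I * (ω : ℂ) * ((φ y : ℝ) : ℂ)))
      (Complex.exp (Complex.I * (ω : ℂ) * ((φ x : ℝ) : ℂ))
        • ((Complex.I * (ω : ℂ)) • (Complex.ofRealCLM.comp φ'))) B x := hw.cexp
  have hmul1 := hAc.mul hexp1
  -- second term
  have hℓ : HasFDerivAt (fun y : EuclideanSpace ℝ (Fin d) => φ x₀ + ⟪g₀, y - x₀⟫_ℝ)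
      (innerSL ℝ g₀) x := by
    have heq : (fun y : EuclideanSpace ℝ (Fin d) => φ x₀ + ⟪g₀, y - x₀⟫_ℝ)
        = fun y => (φ x₀ - ⟪g₀, x₀⟫_ℝ) + ⟪g₀, y⟫_ℝ := by
      funext y; rw [inner_sub_right]; ring
    rw [heq]
    exact ((innerSL ℝ g₀).hasFDerivAt).const_add _
  have hℓc : HasFDerivWithinAt
      (fun y : EuclideanSpace ℝ (Fin d) => (((φ x₀ + ⟪g₀, y - x₀⟫_ℝ : ℝ)) : ℂ))
      (Complex.ofRealCLM.comp (innerSL ℝ g₀ : EuclideanSpace ℝ (Fin d) →L[ℝ] ℝ)) B x :=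
    Complex.ofRealCLM.hasFDerivAt.comp_hasFDerivWithinAt x hℓ.hasFDerivWithinAt
  have hw2 : HasFDerivWithinAt
      (fun y : EuclideanSpace ℝ (Fin d) =>
        Complex.I * (ω : ℂ) * (((φ x₀ + ⟪g₀, y - x₀⟫_ℝ : ℝ)) : ℂ))
      ((Complex.I * (ω : ℂ)) • (Complex.ofRealCLM.comp
        (innerSL ℝ g₀ : EuclideanSpace ℝ (Fin d) →L[ℝ] ℝ))) B x := hℓc.const_mul _
  have hexp2 := hw2.cexp
  have hmul2 := hexp2.const_mul ((A x₀ : ℝ) : ℂ)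
  have hsub := hmul1.sub hmul2
  have hδu' : HasFDerivWithinAt δu _ B x := hsub.congr (fun y _ => (hδu y)) (hδu x)
  rw [hδu'.fderivWithin (hBu x hx)]
  simp only [ContinuousLinearMap.add_apply, ContinuousLinearMap.sub_apply,
    ContinuousLinearMap.coe_smul', Pi.smul_apply, ContinuousLinearMap.coe_comp',
    Function.comp_apply, Complex.ofRealCLM_apply, innerSL_apply_apply, smul_eq_mul]
  ring
lemma abs_add_five (z₁ z₂ z₃ z₄ z₅ : ℂ) :
    ‖z₁ + z₂ + z₃ + z₄ + z₅‖
      ≤ ‖z₁‖ + ‖z₂‖ + ‖z₃‖ + ‖z₄‖ + ‖z₅‖ := by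
  calc ‖z₁ + z₂ + z₃ + z₄ + z₅‖
      ≤ ‖z₁ + z₂ + z₃ + z₄‖ + ‖z₅‖ := norm_add_le _ _
    _ ≤ (‖z₁ + z₂ + z₃‖ + ‖z₄‖) + ‖z₅‖ :=
        add_le_add_left (norm_add_le _ _) _
    _ ≤ ((‖z₁ + z₂‖ + ‖z₃‖) + ‖z₄‖) + ‖z₅‖ :=
        add_le_add_left (add_le_add_left (norm_add_le _ _) _) _
    _ ≤ (((‖z₁‖ + ‖z₂‖) + ‖z₃‖) + ‖z₄‖)
          + ‖z₅‖ :=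
        add_le_add_left (add_le_add_left (add_le_add_left (norm_add_le _ _) _) _) _

end helpers

/-- Key scaling for NMLA applied to wave-field data: sampling the impedance perturbation
`δU(x) = (1/(iωη₀))D_ŝ(δu)(x) + δu(x)` of `u = A e^{iωφ}` relative to its local
plane-wave approximation at `x₀`, on the circle of radius `r = C_ε ω^{-1/2}`, gives for
`ω ≥ 1` the bound `|δU| ≤ C_ε²C₂C₃ + (C₁/η₀ + 2C_εC₁ + C_εC₂C₃/η₀)ω^{-1/2}`, where
`C₁ = sup_B ‖∇A‖`, `C₂ = sup_B |A|`, `C₃ = sup_B ‖∇²φ‖` on `B = closedBall(x₀, C_ε)` and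
`η₀ = ‖∇φ(x₀)‖`. -/
theorem stmt_15 {d : ℕ} (hd : 1 ≤ d)
    (x₀ : EuclideanSpace ℝ (Fin d)) (Cε : ℝ) (hCε : 0 < Cε)
    (A φ : EuclideanSpace ℝ (Fin d) → ℝ)
    (hA : ContDiffOn ℝ 1 A (closedBall x₀ Cε))
    (hφ : ContDiffOn ℝ 2 φ (closedBall x₀ Cε))
    (hgrad : gradient φ x₀ ≠ 0)
    (C₁ C₂ C₃ : ℝ)
    (hC₁ : ∀ y ∈ closedBall x₀ Cε, ‖fderivWithin ℝ A (closedBall x₀ Cε) y‖ ≤ C₁)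
    (hC₂ : ∀ y ∈ closedBall x₀ Cε, |A y| ≤ C₂)
    (hC₃ : ∀ y ∈ closedBall x₀ Cε,
      ‖fderivWithin ℝ (fun z => fderivWithin ℝ φ (closedBall x₀ Cε) z)
          (closedBall x₀ Cε) y‖ ≤ C₃) :
    ∀ ω : ℝ, 1 ≤ ω →
      ∀ δu : EuclideanSpace ℝ (Fin d) → ℂ,
      (∀ y, δu y = (A y : ℂ) * Complex.exp (Complex.I * (ω : ℂ) * (φ y : ℂ))
          - (A x₀ : ℂ) * Complex.exp (Complex.I * (ω : ℂ)
              * ((φ x₀ + ⟪gradient φ x₀, y - x₀⟫_ℝ : ℝ) : ℂ))) →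
      ∀ s : EuclideanSpace ℝ (Fin d), ‖s‖ = 1 →
        ‖((1 / (Complex.I * (ω : ℂ) * ((‖gradient φ x₀‖ : ℝ) : ℂ)))
              * fderivWithin ℝ δu (closedBall x₀ Cε)
                  (x₀ + (Cε * ω ^ (-(1/2 : ℝ))) • s) s
            + δu (x₀ + (Cε * ω ^ (-(1/2 : ℝ))) • s))‖
        ≤ Cε ^ 2 * C₂ * C₃
          + (C₁ / ‖gradient φ x₀‖ + 2 * Cε * C₁ + Cε * C₂ * C₃ / ‖gradient φ x₀‖)
              * ω ^ (-(1/2 : ℝ)) := by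
  intro ω hω δu hδu s hs
  have hω0 : (0:ℝ) < ω := lt_of_lt_of_le one_pos hω
  have hBconv : Convex ℝ (closedBall x₀ Cε) := convex_closedBall _ _
  have hBu : UniqueDiffOn ℝ (closedBall x₀ Cε) := uniqueDiffOn_convex hBconv
    (by rw [interior_closedBall x₀ (ne_of_gt hCε)]; exact ⟨x₀, mem_ball_self hCε⟩)
  have hx₀B : x₀ ∈ closedBall x₀ Cε := mem_closedBall_self hCε.le
  set g₀ := gradient φ x₀ with hg₀def
  set η := ‖g₀‖ with hηdef
  have hη : 0 < η := norm_pos_iff.mpr hgrad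
  set rω : ℝ := ω ^ (-(1/2 : ℝ)) with hrωdef
  have hrω0 : 0 < rω := Real.rpow_pos_of_pos hω0 _
  have hrω1 : rω ≤ 1 := Real.rpow_le_one_of_one_le_of_nonpos hω (by norm_num)
  set r := Cε * rω with hrdef
  have hr0 : 0 < r := mul_pos hCε hrω0
  have hrCε : r ≤ Cε := by nlinarith
  set x := x₀ + r • s with hxdef
  have hxx₀ : x - x₀ = r • s := by rw [hxdef]; abel
  have hxs : ‖x - x₀‖ = r := by rw [hxx₀, norm_smul, hs, Real.norm_eq_abs,
    _root_.abs_of_pos hr0, mul_one]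
  have hxB : x ∈ closedBall x₀ Cε := by
    rw [mem_closedBall, dist_eq_norm, hxs]; exact hrCε
  have hC₁0 : 0 ≤ C₁ := le_trans (norm_nonneg _) (hC₁ x₀ hx₀B)
  have hC₂0 : 0 ≤ C₂ := le_trans (abs_nonneg _) (hC₂ x₀ hx₀B)
  have hC₃0 : 0 ≤ C₃ := le_trans (by positivity) (hC₃ x₀ hx₀B)
  -- differentiability of φ at x₀ (from nonzero gradient)
  have hφdiff : DifferentiableAt ℝ φ x₀ := by
    by_contra h
    exact hgrad (by rw [hg₀def, show gradient φ x₀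
      = (InnerProductSpace.toDual ℝ _).symm (fderiv ℝ φ x₀) from rfl,
      fderiv_zero_of_not_differentiableAt h, map_zero])
  have hinner : ∀ v, ⟪g₀, v⟫_ℝ = fderiv ℝ φ x₀ v := fun v =>
    InnerProductSpace.toDual_symm_apply
  have hφ'x₀ : fderivWithin ℝ φ (closedBall x₀ Cε) x₀ = fderiv ℝ φ x₀ :=
    fderivWithin_eq_fderiv (hBu x₀ hx₀B) hφdiff
  -- Lipschitz bound for the derivative of φ
  have hφ'cd : ContDiffOn ℝ 1 (fun y => fderivWithin ℝ φ (closedBall x₀ Cε) y)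
      (closedBall x₀ Cε) := hφ.fderivWithin hBu (by norm_num)
  have hlip : ∀ y ∈ closedBall x₀ Cε,
      ‖fderivWithin ℝ φ (closedBall x₀ Cε) y - fderivWithin ℝ φ (closedBall x₀ Cε) x₀‖
        ≤ C₃ * ‖y - x₀‖ := fun y hy =>
    hBconv.norm_image_sub_le_of_norm_fderivWithin_le (hφ'cd.differentiableOn one_ne_zero)
      hC₃ hx₀B hy
  -- Lipschitz bound for A
  have hAlip : |A x - A x₀| ≤ C₁ * r := by
    have := hBconv.norm_image_sub_le_of_norm_fderivWithin_le (hA.differentiableOn one_ne_zero)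
      hC₁ hx₀B hxB
    rwa [Real.norm_eq_abs, hxs] at this
  -- Taylor bound
  have hTay0 : |φ x - φ x₀ - fderivWithin ℝ φ (closedBall x₀ Cε) x₀ (r • s)|
      ≤ C₃ * r ^ 2 / 2 := taylor_half_aux x₀ φ hφ hlip hr0 hrCε s hs
  have hp : fderivWithin ℝ φ (closedBall x₀ Cε) x₀ s = ⟪g₀, s⟫_ℝ := by
    rw [hφ'x₀, hinner]
  have hpx : ⟪g₀, x - x₀⟫_ℝ = r * ⟪g₀, s⟫_ℝ := by
    rw [hxx₀, real_inner_smul_right]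
  have hrs : fderivWithin ℝ φ (closedBall x₀ Cε) x₀ (r • s) = r * ⟪g₀, s⟫_ℝ := by
    rw [map_smul, hp, smul_eq_mul]
  have hTay : |φ x - (φ x₀ + ⟪g₀, x - x₀⟫_ℝ)| ≤ C₃ * r ^ 2 / 2 := by
    rw [hpx]
    calc |φ x - (φ x₀ + r * ⟪g₀, s⟫_ℝ)|
        = |φ x - φ x₀ - fderivWithin ℝ φ (closedBall x₀ Cε) x₀ (r • s)| := by
          rw [hrs]; ring_nf
      _ ≤ C₃ * r ^ 2 / 2 := hTay0
  -- exp difference bound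
  have hE : ‖Complex.exp (Complex.I * (ω : ℂ) * (φ x : ℂ))
      - Complex.exp (Complex.I * (ω : ℂ) * ((φ x₀ + ⟪g₀, x - x₀⟫_ℝ : ℝ) : ℂ))‖
      ≤ ω * (C₃ * r ^ 2 / 2) := by
    calc ‖_‖ ≤ ω * |φ x - (φ x₀ + ⟪g₀, x - x₀⟫_ℝ)| :=
          exp_I_omega_sub ω _ _ hω0.le
      _ ≤ ω * (C₃ * r ^ 2 / 2) := mul_le_mul_of_nonneg_left hTay hω0.le
  -- various scalar bounds
  have ha' : |fderivWithin ℝ A (closedBall x₀ Cε) x s| ≤ C₁ := by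
    calc |fderivWithin ℝ A (closedBall x₀ Cε) x s|
        ≤ ‖fderivWithin ℝ A (closedBall x₀ Cε) x‖ * ‖s‖ := by
          rw [← Real.norm_eq_abs]; exact (fderivWithin ℝ A (closedBall x₀ Cε) x).le_opNorm s
      _ = ‖fderivWithin ℝ A (closedBall x₀ Cε) x‖ := by rw [hs, mul_one]
      _ ≤ C₁ := hC₁ x hxB
  have hq : |fderivWithin ℝ φ (closedBall x₀ Cε) x s - ⟪g₀, s⟫_ℝ| ≤ C₃ * r := by
    have h1 : fderivWithin ℝ φ (closedBall x₀ Cε) x s - ⟪g₀, s⟫_ℝ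
        = (fderivWithin ℝ φ (closedBall x₀ Cε) x
            - fderivWithin ℝ φ (closedBall x₀ Cε) x₀) s := by
      rw [← hp]; simp [ContinuousLinearMap.sub_apply]
    rw [h1]
    calc |(fderivWithin ℝ φ (closedBall x₀ Cε) x
            - fderivWithin ℝ φ (closedBall x₀ Cε) x₀) s|
        ≤ ‖fderivWithin ℝ φ (closedBall x₀ Cε) x
            - fderivWithin ℝ φ (closedBall x₀ Cε) x₀‖ * ‖s‖ := by
          rw [← Real.norm_eq_abs]; exact ContinuousLinearMap.le_opNorm _ s
      _ = ‖fderivWithin ℝ φ (closedBall x₀ Cε) x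
            - fderivWithin ℝ φ (closedBall x₀ Cε) x₀‖ := by rw [hs, mul_one]
      _ ≤ C₃ * ‖x - x₀‖ := hlip x hxB
      _ = C₃ * r := by rw [hxs]
  have hpη : |⟪g₀, s⟫_ℝ| ≤ η := by
    calc |⟪g₀, s⟫_ℝ| ≤ ‖g₀‖ * ‖s‖ := abs_real_inner_le_norm g₀ s
      _ = η := by rw [hs, mul_one, hηdef]
  -- the derivative value
  have hDval := deriv_eval x₀ hCε A φ hA hφ g₀ ω δu hδu x hxB s
  rw [hDval, hδu x]
  -- abbreviations
  set E1 := Complex.exp (Complex.I * (ω : ℂ) * (φ x : ℂ)) with hE1def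
  set E2 := Complex.exp (Complex.I * (ω : ℂ) * ((φ x₀ + ⟪g₀, x - x₀⟫_ℝ : ℝ) : ℂ)) with hE2def
  set a' := fderivWithin ℝ A (closedBall x₀ Cε) x s with ha'def
  set qv := fderivWithin ℝ φ (closedBall x₀ Cε) x s with hqvdef
  set pv := ⟪g₀, s⟫_ℝ with hpvdef
  have hη' : (η : ℂ) ≠ 0 := Complex.ofReal_ne_zero.mpr hη.ne'
  have hω' : (ω : ℂ) ≠ 0 := Complex.ofReal_ne_zero.mpr hω0.ne'
  have habsE1 : ‖E1‖ = 1 := by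
    rw [hE1def, show Complex.I * (ω : ℂ) * (φ x : ℂ) = ((ω * φ x : ℝ) : ℂ) * Complex.I by
      push_cast; ring, Complex.norm_exp_ofReal_mul_I]
  have habsT : ‖1 / (Complex.I * (ω : ℂ) * (η : ℂ))‖ = 1 / (ω * η) := by
    rw [norm_div, norm_one, norm_mul, norm_mul, Complex.norm_I, Complex.norm_real, Real.norm_eq_abs,
      Complex.norm_real, Real.norm_eq_abs, one_mul, _root_.abs_of_pos hω0, _root_.abs_of_pos hη]
  -- algebraic decomposition
  have hval : 1 / (Complex.I * (ω : ℂ) * (η : ℂ))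
        * ((a' : ℂ) * E1 + (A x : ℂ) * (Complex.I * (ω : ℂ) * (qv : ℂ)) * E1
            - (A x₀ : ℂ) * (Complex.I * (ω : ℂ) * (pv : ℂ)) * E2)
        + ((A x : ℂ) * E1 - (A x₀ : ℂ) * E2)
      = (a' : ℂ) * E1 * (1 / (Complex.I * (ω : ℂ) * (η : ℂ)))
        + ((A x * qv - A x₀ * pv : ℝ) : ℂ) / (η : ℂ) * E1
        + ((A x₀ * pv : ℝ) : ℂ) / (η : ℂ) * (E1 - E2)
        + ((A x - A x₀ : ℝ) : ℂ) * E1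
        + (A x₀ : ℂ) * (E1 - E2) := by
    have hIωη : Complex.I * (ω : ℂ) * (η : ℂ) ≠ 0 :=
      mul_ne_zero (mul_ne_zero Complex.I_ne_zero hω') hη'
    push_cast
    apply mul_left_cancel₀ hIωη
    field_simp
    ring
  rw [hval]
  -- individual bounds
  have b1 : ‖(a' : ℂ) * E1 * (1 / (Complex.I * (ω : ℂ) * (η : ℂ)))‖
      ≤ C₁ * (1 / (ω * η)) := by
    rw [norm_mul, norm_mul, Complex.norm_real, Real.norm_eq_abs, habsE1, habsT, mul_one]
    exact mul_le_mul_of_nonneg_right ha' (by positivity)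
  have hnum : |A x * qv - A x₀ * pv| ≤ C₂ * (C₃ * r) + η * (C₁ * r) := by
    have hdec : A x * qv - A x₀ * pv = A x * (qv - pv) + pv * (A x - A x₀) := by ring
    rw [hdec]
    calc |A x * (qv - pv) + pv * (A x - A x₀)|
        ≤ |A x * (qv - pv)| + |pv * (A x - A x₀)| := abs_add_le _ _
      _ = |A x| * |qv - pv| + |pv| * |A x - A x₀| := by rw [abs_mul, abs_mul]
      _ ≤ C₂ * (C₃ * r) + η * (C₁ * r) := add_le_add
          (mul_le_mul (hC₂ x hxB) hq (abs_nonneg _) hC₂0)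
          (mul_le_mul hpη hAlip (abs_nonneg _) hη.le)
  have b2 : ‖((A x * qv - A x₀ * pv : ℝ) : ℂ) / (η : ℂ) * E1‖
      ≤ (C₂ * (C₃ * r) + η * (C₁ * r)) / η := by
    rw [norm_mul, habsE1, mul_one, norm_div, Complex.norm_real, Real.norm_eq_abs, Complex.norm_real, Real.norm_eq_abs,
      _root_.abs_of_pos hη]
    gcongr
  have b3 : ‖((A x₀ * pv : ℝ) : ℂ) / (η : ℂ) * (E1 - E2)‖
      ≤ C₂ * (ω * (C₃ * r ^ 2 / 2)) := by
    rw [norm_mul, norm_div, Complex.norm_real, Real.norm_eq_abs, Complex.norm_real, Real.norm_eq_abs, _root_.abs_of_pos hη]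
    have h1 : |A x₀ * pv| ≤ C₂ * η := by
      rw [abs_mul]; exact mul_le_mul (hC₂ x₀ hx₀B) hpη (abs_nonneg _) hC₂0
    calc |A x₀ * pv| / η * ‖E1 - E2‖
        ≤ (C₂ * η) / η * (ω * (C₃ * r ^ 2 / 2)) := by
          have h2 : (0:ℝ) ≤ ω * (C₃ * r ^ 2 / 2) := by positivity
          apply mul_le_mul (by gcongr) hE (norm_nonneg _)
          positivity
      _ = C₂ * (ω * (C₃ * r ^ 2 / 2)) := by field_simp
  have b4 : ‖((A x - A x₀ : ℝ) : ℂ) * E1‖ ≤ C₁ * r := by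
    rw [norm_mul, Complex.norm_real, Real.norm_eq_abs, habsE1, mul_one]; exact hAlip
  have b5 : ‖(A x₀ : ℂ) * (E1 - E2)‖ ≤ C₂ * (ω * (C₃ * r ^ 2 / 2)) := by
    rw [norm_mul, Complex.norm_real, Real.norm_eq_abs]
    exact mul_le_mul (hC₂ x₀ hx₀B) hE (norm_nonneg _) hC₂0
  -- final arithmetic
  have hrr : ω * r ^ 2 = Cε ^ 2 := by
    have h1 : (ω ^ (-(1/2):ℝ)) ^ 2 = ω⁻¹ := by
      rw [← Real.rpow_natCast (ω ^ (-(1/2):ℝ)) 2, ← Real.rpow_mul hω0.le]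
      norm_num [Real.rpow_neg_one]
    rw [hrdef, hrωdef, mul_pow, h1]
    field_simp
  have hinv : 1 / ω ≤ rω := by
    have h2 : rω * rω = ω⁻¹ := by
      rw [hrωdef, ← Real.rpow_add hω0]
      norm_num [Real.rpow_neg_one]
    calc 1 / ω = rω * rω := by rw [one_div, ← h2]
      _ ≤ rω * 1 := mul_le_mul_of_nonneg_left hrω1 hrω0.le
      _ = rω := mul_one _
  have e1 : C₁ * (1 / (ω * η)) ≤ (C₁ / η) * rω := by
    have h3 : C₁ * (1 / (ω * η)) = (C₁ / η) * (1 / ω) := by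
      field_simp
    rw [h3]
    exact mul_le_mul_of_nonneg_left hinv (div_nonneg hC₁0 hη.le)
  have e2 : (C₂ * (C₃ * r) + η * (C₁ * r)) / η = (Cε * C₂ * C₃ / η) * rω + Cε * C₁ * rω := by
    rw [hrdef]; field_simp
  have e3 : C₂ * (ω * (C₃ * r ^ 2 / 2)) = Cε ^ 2 * C₂ * C₃ / 2 := by
    have h4 : ω * (C₃ * r ^ 2 / 2) = C₃ * (ω * r ^ 2) / 2 := by ring
    rw [h4, hrr]; ring
  have e4 : C₁ * r = Cε * C₁ * rω := by rw [hrdef]; ring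
  refine le_trans (abs_add_five _ _ _ _ _) ?_
  calc ‖(a' : ℂ) * E1 * (1 / (Complex.I * (ω : ℂ) * (η : ℂ)))‖
        + ‖((A x * qv - A x₀ * pv : ℝ) : ℂ) / (η : ℂ) * E1‖
        + ‖((A x₀ * pv : ℝ) : ℂ) / (η : ℂ) * (E1 - E2)‖
        + ‖((A x - A x₀ : ℝ) : ℂ) * E1‖
        + ‖(A x₀ : ℂ) * (E1 - E2)‖
      ≤ (C₁ / η) * rω + ((Cε * C₂ * C₃ / η) * rω + Cε * C₁ * rω)
          + Cε ^ 2 * C₂ * C₃ / 2 + Cε * C₁ * rω + Cε ^ 2 * C₂ * C₃ / 2 := by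
        rw [← e2, ← e3, ← e4]
        linarith [b1, b2, b3, b4, b5, e1]
    _ = Cε ^ 2 * C₂ * C₃ + (C₁ / η + 2 * Cε * C₁ + Cε * C₂ * C₃ / η) * rω := by ring
end

section
/- In the setting of the previous result (A C¹ and φ C² on closedBall(x₀, C_ε) with ∇φ(x₀) ≠ 0; constants C₁ = sup‖∇A‖, C₂ = sup|A|, C₃ = sup‖∇²φ‖, η₀ = ‖∇φ(x₀)‖; δU the impedance perturbation of u = A e^{iωφ} relative to its local plane-wave approximation at x₀, sampled at radius r = C_ε ω^{-1/2}), assume additionally that A(x₀) ≠ 0 and that C_ε² C₂ C₃ < |A(x₀)|/4. Then there exists ω₀ ≥ 1 such that for every ω ≥ ω₀, every unit vector ŝ, and x = x₀ + C_ε ω^{-1/2} ŝ, one has |δU(x)| < |A(x₀)|/4. -/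
open Complex Metric
open scoped InnerProductSpace BigOperators

lemma norm_ofReal_eq_abs' (r : ℝ) : ‖(r : ℂ)‖ = |r| := by
  rw [Complex.norm_real, Real.norm_eq_abs]

lemma abs_exp_I_sub_exp_I (a b : ℝ) :
    ‖Complex.exp ((a : ℂ) * Complex.I) - Complex.exp ((b : ℂ) * Complex.I)‖
      ≤ |a - b| := by
  have h : ∀ t : ℝ, HasDerivAt (fun u : ℝ => Complex.exp ((u : ℂ) * Complex.I))
      (Complex.exp ((t : ℂ) * Complex.I) * Complex.I) t := by
    intro t
    have h1 : HasDerivAt (fun u : ℝ => (u : ℂ) * Complex.I) Complex.I t := by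
      simpa using (Complex.ofRealCLM.hasDerivAt (x := t)).mul_const Complex.I
    exact h1.cexp
  have := Convex.norm_image_sub_le_of_norm_hasDerivWithin_le
    (f := fun u : ℝ => Complex.exp ((u : ℂ) * Complex.I))
    (f' := fun t : ℝ => Complex.exp ((t : ℂ) * Complex.I) * Complex.I)
    (C := 1) (fun t _ => (h t).hasDerivWithinAt)
    (fun t _ => by simp [Complex.norm_exp]) convex_univ (Set.mem_univ b) (Set.mem_univ a)
  simpa [Real.norm_eq_abs] using this

lemma taylor_half {E : Type*} [NormedAddCommGroup E] [NormedSpace ℝ E]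
    {f : E → ℝ} {f' : E → E →L[ℝ] ℝ} {s : Set E} (hconv : Convex ℝ s)
    {x₀ x : E} (hx₀ : x₀ ∈ s) (hx : x ∈ s) {C : ℝ}
    (hf : ∀ y ∈ s, HasFDerivWithinAt f (f' y) s y)
    (hlip : ∀ y ∈ s, ‖f' y - f' x₀‖ ≤ C * ‖y - x₀‖) :
    |f x - f x₀ - f' x₀ (x - x₀)| ≤ C / 2 * ‖x - x₀‖ ^ 2 := by
  set v := x - x₀ with hv
  set γ : ℝ → E := fun t => x₀ + t • v with hγ
  have hγmem : ∀ t ∈ Set.Icc (0:ℝ) 1, γ t ∈ s := by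
    intro t ht
    exact hconv.add_smul_sub_mem hx₀ hx ht
  set g : ℝ → ℝ := fun t => f (γ t) - t * (f' x₀ v) with hgdef
  have hγ' : ∀ t : ℝ, HasDerivAt γ v t := by
    intro t
    simpa [hγ] using ((hasDerivAt_id t).smul_const v).const_add x₀
  have hg' : ∀ t ∈ Set.Icc (0:ℝ) 1,
      HasDerivWithinAt g (f' (γ t) v - f' x₀ v) (Set.Icc (0:ℝ) 1) t := by
    intro t ht
    have h1 : HasDerivWithinAt (fun u => f (γ u)) (f' (γ t) v) (Set.Icc (0:ℝ) 1) t :=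
      (hf (γ t) (hγmem t ht)).comp_hasDerivWithinAt t ((hγ' t).hasDerivWithinAt)
        (fun u hu => hγmem u hu)
    exact h1.sub ((hasDerivAt_mul_const (f' x₀ v)).hasDerivWithinAt)
  have key : ∀ t ∈ Set.Icc (0:ℝ) 1, ‖g t - g 0‖ ≤ C * ‖v‖ ^ 2 / 2 * t ^ 2 := by
    have hcont : ContinuousOn (fun t => g t - g 0) (Set.Icc (0:ℝ) 1) :=
      (fun t ht => ((hg' t ht).continuousWithinAt.sub continuousWithinAt_const))
    have hder : ∀ t ∈ Set.Ico (0:ℝ) 1,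
        HasDerivWithinAt (fun u => g u - g 0) (f' (γ t) v - f' x₀ v) (Set.Ici t) t := by
      intro t ht
      have := ((hg' t (Set.mem_Icc_of_Ico ht)).sub
        (hasDerivWithinAt_const _ _ (g 0))).mono_of_mem_nhdsWithin
        (Icc_mem_nhdsGE_of_mem ht)
      simpa [Pi.sub_def] using this
    have hB : ∀ t : ℝ, HasDerivAt (fun u : ℝ => C * ‖v‖ ^ 2 / 2 * u ^ 2)
        (C * ‖v‖ ^ 2 * t) t := by
      intro t
      have := (hasDerivAt_pow 2 t).const_mul (C * ‖v‖ ^ 2 / 2)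
      refine this.congr_deriv ?_
      simp; ring
    have hbound : ∀ t ∈ Set.Ico (0:ℝ) 1, ‖f' (γ t) v - f' x₀ v‖ ≤ C * ‖v‖ ^ 2 * t := by
      intro t ht
      have h1 : ‖f' (γ t) v - f' x₀ v‖ ≤ ‖f' (γ t) - f' x₀‖ * ‖v‖ := by
        have := (f' (γ t) - f' x₀).le_opNorm v
        simpa using this
      have h2 : ‖f' (γ t) - f' x₀‖ ≤ C * (t * ‖v‖) := by
        have := hlip (γ t) (hγmem t (Set.mem_Icc_of_Ico ht))
        simpa [hγ, norm_smul, _root_.abs_of_nonneg ht.1] using this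
      calc ‖f' (γ t) v - f' x₀ v‖ ≤ C * (t * ‖v‖) * ‖v‖ :=
            h1.trans (by gcongr)
        _ = C * ‖v‖ ^ 2 * t := by ring
    intro t ht
    have := image_norm_le_of_norm_deriv_right_le_deriv_boundary hcont hder
      (by simp) hB hbound ht
    simpa using this
  have h1 := key 1 (by norm_num)
  have hgval : g 1 - g 0 = f x - f x₀ - f' x₀ (x - x₀) := by
    simp only [hgdef, hγ, hv]
    simp
    ring
  rw [hgval] at h1
  calc |f x - f x₀ - f' x₀ (x - x₀)| ≤ C * ‖x - x₀‖ ^ 2 / 2 * 1 ^ 2 := h1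
    _ = C / 2 * ‖x - x₀‖ ^ 2 := by ring

set_option maxHeartbeats 2000000 in
/-- Smallness of the NMLA impedance perturbation at high frequency: in the setting of the
`r = C_ε ω^{-1/2}` sampling scaling, if additionally `A(x₀) ≠ 0` and
`C_ε²C₂C₃ < |A(x₀)|/4`, then there is `ω₀ ≥ 1` such that for all `ω ≥ ω₀`, all unit `ŝ`
and `x = x₀ + C_ε ω^{-1/2} ŝ`, the impedance perturbation of `u = A e^{iωφ}` relative to
its local plane-wave approximation at `x₀` satisfies `|δU(x)| < |A(x₀)|/4` — the
stability condition for NMLA direction recovery. -/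
theorem stmt_16 {d : ℕ} (hd : 1 ≤ d)
    (x₀ : EuclideanSpace ℝ (Fin d)) (Cε : ℝ) (hCε : 0 < Cε)
    (A φ : EuclideanSpace ℝ (Fin d) → ℝ)
    (hA : ContDiffOn ℝ 1 A (closedBall x₀ Cε))
    (hφ : ContDiffOn ℝ 2 φ (closedBall x₀ Cε))
    (hgrad : gradient φ x₀ ≠ 0)
    (C₁ C₂ C₃ : ℝ)
    (hC₁ : ∀ y ∈ closedBall x₀ Cε, ‖fderivWithin ℝ A (closedBall x₀ Cε) y‖ ≤ C₁)
    (hC₂ : ∀ y ∈ closedBall x₀ Cε, |A y| ≤ C₂)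
    (hC₃ : ∀ y ∈ closedBall x₀ Cε,
      ‖fderivWithin ℝ (fun z => fderivWithin ℝ φ (closedBall x₀ Cε) z)
          (closedBall x₀ Cε) y‖ ≤ C₃)
    (hA₀ : A x₀ ≠ 0)
    (hsmall : Cε ^ 2 * C₂ * C₃ < |A x₀| / 4) :
    ∃ ω₀ : ℝ, 1 ≤ ω₀ ∧ ∀ ω : ℝ, ω₀ ≤ ω →
      ∀ δu : EuclideanSpace ℝ (Fin d) → ℂ,
      (∀ y, δu y = (A y : ℂ) * Complex.exp (Complex.I * (ω : ℂ) * (φ y : ℂ))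
          - (A x₀ : ℂ) * Complex.exp (Complex.I * (ω : ℂ)
              * ((φ x₀ + ⟪gradient φ x₀, y - x₀⟫_ℝ : ℝ) : ℂ))) →
      ∀ s : EuclideanSpace ℝ (Fin d), ‖s‖ = 1 →
        ‖          ((1 / (Complex.I * (ω : ℂ) * ((‖gradient φ x₀‖ : ℝ) : ℂ)))
              * fderivWithin ℝ δu (closedBall x₀ Cε)
                  (x₀ + (Cε * ω ^ (-(1/2 : ℝ))) • s) s
            + δu (x₀ + (Cε * ω ^ (-(1/2 : ℝ))) • s))‖
        < |A x₀| / 4 := by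
  classical
  set S := closedBall x₀ Cε with hSdef
  have hconv : Convex ℝ S := convex_closedBall _ _
  have huniq : UniqueDiffOn ℝ S := by
    apply uniqueDiffOn_convex hconv
    rw [hSdef, interior_closedBall _ (ne_of_gt hCε)]
    exact ⟨x₀, mem_ball_self hCε⟩
  have hx₀S : x₀ ∈ S := mem_closedBall_self hCε.le
  have hC₁0 : 0 ≤ C₁ := le_trans (norm_nonneg _) (hC₁ x₀ hx₀S)
  have hC₂0 : 0 ≤ C₂ := le_trans (abs_nonneg _) (hC₂ x₀ hx₀S)
  have hC₃0 : 0 ≤ C₃ := le_trans (norm_nonneg (fderivWithin ℝ (fun z => fderivWithin ℝ φ S z) S x₀)) (hC₃ x₀ hx₀S)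
  set η := ‖gradient φ x₀‖ with hηdef
  have hη : 0 < η := norm_pos_iff.mpr hgrad
  set gap := |A x₀| / 4 - Cε ^ 2 * C₂ * C₃ with hgapdef
  have hgap0 : 0 < gap := by simp only [hgapdef]; linarith
  set K := C₁ / η + C₁ * Cε * (η + C₃ * Cε) / η + C₂ * C₃ * Cε / η + C₁ * Cε with hKdef
  have hK0 : 0 ≤ K := by
    have := hη.le
    positivity
  -- basic differentiability facts
  have hAdiff : DifferentiableOn ℝ A S := hA.differentiableOn one_ne_zero
  have hφdiff : DifferentiableOn ℝ φ S := hφ.differentiableOn two_ne_zero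
  set dA := fun y => fderivWithin ℝ A S y with hdAdef
  set dφ := fun y => fderivWithin ℝ φ S y with hdφdef
  have hdφdiff : DifferentiableOn ℝ dφ S :=
    (hφ.fderivWithin huniq le_rfl).differentiableOn one_ne_zero
  have hLip : ∀ y ∈ S, ‖dφ y - dφ x₀‖ ≤ C₃ * ‖y - x₀‖ := fun y hy =>
    hconv.norm_image_sub_le_of_norm_fderivWithin_le hdφdiff hC₃ hx₀S hy
  have hALip : ∀ y ∈ S, |A y - A x₀| ≤ C₁ * ‖y - x₀‖ := fun y hy =>
    hconv.norm_image_sub_le_of_norm_fderivWithin_le hAdiff hC₁ hx₀S hy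
  -- gradient facts
  have hfdeq : dφ x₀ = fderiv ℝ φ x₀ :=
    fderivWithin_of_mem_nhds (closedBall_mem_nhds x₀ hCε)
  have hinner : ∀ w, ⟪gradient φ x₀, w⟫_ℝ = dφ x₀ w := by
    intro w
    rw [hfdeq, gradient]
    exact InnerProductSpace.toDual_symm_apply
  have hnormdφ : ‖dφ x₀‖ = η := by
    rw [hfdeq, hηdef, gradient]
    exact (LinearIsometryEquiv.norm_map _ _).symm
  -- Taylor bound for φ
  have hTaylor : ∀ y ∈ S, |φ y - φ x₀ - dφ x₀ (y - x₀)| ≤ C₃ / 2 * ‖y - x₀‖ ^ 2 := by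
    intro y hy
    exact taylor_half hconv hx₀S hy (fun z hz => (hφdiff z hz).hasFDerivWithinAt) hLip
  refine ⟨max 1 ((K / gap) ^ 2 + 1), le_max_left _ _, ?_⟩
  intro ω hω δu hδu s hs
  have hω1 : (1:ℝ) ≤ ω := le_trans (le_max_left _ _) hω
  have hω0 : (0:ℝ) < ω := lt_of_lt_of_le one_pos hω1
  have hδu' : δu = fun y => (A y : ℂ) * Complex.exp (Complex.I * (ω : ℂ) * (φ y : ℂ))
      - (A x₀ : ℂ) * Complex.exp (Complex.I * (ω : ℂ)
          * ((φ x₀ + ⟪gradient φ x₀, y - x₀⟫_ℝ : ℝ) : ℂ)) := funext hδu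
  subst hδu'
  set w := ω ^ (-(1/2:ℝ)) with hwdef
  have hw0 : 0 < w := Real.rpow_pos_of_pos hω0 _
  have hw1 : w ≤ 1 := Real.rpow_le_one_of_one_le_of_nonpos hω1 (by norm_num)
  have hinvw : ω⁻¹ ≤ w := by
    rw [hwdef, ← Real.rpow_neg_one]
    exact Real.rpow_le_rpow_of_exponent_le hω1 (by norm_num)
  have hw2 : w ^ 2 = ω⁻¹ := by
    rw [sq, hwdef, ← Real.rpow_add hω0, ← Real.rpow_neg_one]
    norm_num
  set r := Cε * w with hrdef
  have hr0 : 0 < r := mul_pos hCε hw0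
  have hrCε : r ≤ Cε := by nlinarith
  set x := x₀ + r • s with hxdef
  have hnormx : ‖x - x₀‖ = r := by
    rw [hxdef, add_sub_cancel_left, norm_smul, hs, Real.norm_eq_abs,
      _root_.abs_of_pos hr0, mul_one]
  have hxS : x ∈ S := by
    rw [hSdef, mem_closedBall, dist_eq_norm, hnormx]
    exact hrCε
  -- derivative computation
  have hφx : HasFDerivWithinAt φ (dφ x) S x := (hφdiff x hxS).hasFDerivWithinAt
  have hAx : HasFDerivWithinAt A (dA x) S x := (hAdiff x hxS).hasFDerivWithinAt
  have hcoeφ : HasFDerivWithinAt (fun y => ((φ y : ℝ) : ℂ))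
      (Complex.ofRealCLM.comp (dφ x)) S x :=
    Complex.ofRealCLM.hasFDerivAt.comp_hasFDerivWithinAt x hφx
  have hcoeA : HasFDerivWithinAt (fun y => ((A y : ℝ) : ℂ))
      (Complex.ofRealCLM.comp (dA x)) S x :=
    Complex.ofRealCLM.hasFDerivAt.comp_hasFDerivWithinAt x hAx
  have hexp1 : HasFDerivWithinAt (fun y => Complex.exp (Complex.I * (ω:ℂ) * (φ y : ℂ)))
      (Complex.exp (Complex.I * (ω:ℂ) * (φ x : ℂ)) •
        ((Complex.I * (ω:ℂ)) • (Complex.ofRealCLM.comp (dφ x)))) S x :=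
    (hcoeφ.const_mul (Complex.I * (ω:ℂ))).cexp
  have hprod : HasFDerivWithinAt
      (fun y => ((A y : ℝ) : ℂ) * Complex.exp (Complex.I * (ω:ℂ) * (φ y : ℂ)))
      (((A x : ℝ) : ℂ) • (Complex.exp (Complex.I * (ω:ℂ) * (φ x : ℂ)) •
          ((Complex.I * (ω:ℂ)) • (Complex.ofRealCLM.comp (dφ x))))
        + Complex.exp (Complex.I * (ω:ℂ) * (φ x : ℂ)) •
            (Complex.ofRealCLM.comp (dA x))) S x :=
    hcoeA.mul hexp1
  have hLfun : HasFDerivWithinAt (fun y => φ x₀ + ⟪gradient φ x₀, y - x₀⟫_ℝ)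
      (innerSL ℝ (gradient φ x₀)) S x := by
    have h1 : HasFDerivAt (fun y : EuclideanSpace ℝ (Fin d) => ⟪gradient φ x₀, y⟫_ℝ)
        (innerSL ℝ (gradient φ x₀)) x := (innerSL ℝ (gradient φ x₀)).hasFDerivAt
    have h2 := (h1.sub_const ⟪gradient φ x₀, x₀⟫_ℝ).const_add (φ x₀)
    have heq : (fun y => φ x₀ + ⟪gradient φ x₀, y - x₀⟫_ℝ)
        = fun y => φ x₀ + (⟪gradient φ x₀, y⟫_ℝ - ⟪gradient φ x₀, x₀⟫_ℝ) := by
      funext y; rw [inner_sub_right]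
    rw [heq]
    exact h2.hasFDerivWithinAt
  have hcoeL : HasFDerivWithinAt
      (fun y => ((φ x₀ + ⟪gradient φ x₀, y - x₀⟫_ℝ : ℝ) : ℂ))
      (Complex.ofRealCLM.comp (innerSL ℝ (gradient φ x₀))) S x :=
    Complex.ofRealCLM.hasFDerivAt.comp_hasFDerivWithinAt x hLfun
  have hexp2 : HasFDerivWithinAt
      (fun y => Complex.exp (Complex.I * (ω:ℂ) * ((φ x₀ + ⟪gradient φ x₀, y - x₀⟫_ℝ : ℝ) : ℂ)))
      (Complex.exp (Complex.I * (ω:ℂ) * ((φ x₀ + ⟪gradient φ x₀, x - x₀⟫_ℝ : ℝ) : ℂ)) •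
        ((Complex.I * (ω:ℂ)) • (Complex.ofRealCLM.comp (innerSL ℝ (gradient φ x₀))))) S x :=
    (hcoeL.const_mul (Complex.I * (ω:ℂ))).cexp
  have hg₂ : HasFDerivWithinAt
      (fun y => ((A x₀ : ℝ) : ℂ) *
        Complex.exp (Complex.I * (ω:ℂ) * ((φ x₀ + ⟪gradient φ x₀, y - x₀⟫_ℝ : ℝ) : ℂ)))
      (((A x₀ : ℝ) : ℂ) •
        (Complex.exp (Complex.I * (ω:ℂ) * ((φ x₀ + ⟪gradient φ x₀, x - x₀⟫_ℝ : ℝ) : ℂ)) •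
          ((Complex.I * (ω:ℂ)) • (Complex.ofRealCLM.comp (innerSL ℝ (gradient φ x₀)))))) S x :=
    hexp2.const_mul _
  have hδuD : HasFDerivWithinAt
      (fun y => ((A y : ℝ) : ℂ) * Complex.exp (Complex.I * (ω:ℂ) * (φ y : ℂ))
        - ((A x₀ : ℝ) : ℂ) *
            Complex.exp (Complex.I * (ω:ℂ) * ((φ x₀ + ⟪gradient φ x₀, y - x₀⟫_ℝ : ℝ) : ℂ)))
      ((((A x : ℝ) : ℂ) • (Complex.exp (Complex.I * (ω:ℂ) * (φ x : ℂ)) •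
          ((Complex.I * (ω:ℂ)) • (Complex.ofRealCLM.comp (dφ x))))
        + Complex.exp (Complex.I * (ω:ℂ) * (φ x : ℂ)) •
            (Complex.ofRealCLM.comp (dA x)))
       - (((A x₀ : ℝ) : ℂ) •
          (Complex.exp (Complex.I * (ω:ℂ) * ((φ x₀ + ⟪gradient φ x₀, x - x₀⟫_ℝ : ℝ) : ℂ)) •
            ((Complex.I * (ω:ℂ)) • (Complex.ofRealCLM.comp (innerSL ℝ (gradient φ x₀))))))) S x :=
    hprod.sub hg₂
  have hfd := hδuD.fderivWithin (huniq x hxS)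
  rw [hfd]
  beta_reduce
  -- abbreviations
  have hE₁ : ‖Complex.exp (Complex.I * (ω:ℂ) * (φ x : ℂ))‖ = 1 := by
    simp [Complex.norm_exp]
  have hE₂ : ‖Complex.exp (Complex.I * (ω:ℂ) *
      ((φ x₀ + ⟪gradient φ x₀, x - x₀⟫_ℝ : ℝ) : ℂ))‖ = 1 := by
    simp [Complex.norm_exp]
  have habsq : ‖1 / (Complex.I * (ω:ℂ) * (η : ℂ))‖ = 1 / (ω * η) := by
    rw [norm_div, norm_one, norm_mul, norm_mul, Complex.norm_I, norm_ofReal_eq_abs',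
      norm_ofReal_eq_abs', one_mul, _root_.abs_of_pos hω0, _root_.abs_of_pos hη]
  have hE12 : ‖Complex.exp (Complex.I * (ω:ℂ) * (φ x : ℂ))
      - Complex.exp (Complex.I * (ω:ℂ) * ((φ x₀ + ⟪gradient φ x₀, x - x₀⟫_ℝ : ℝ) : ℂ))‖
      ≤ ω * (C₃ / 2 * r ^ 2) := by
    have hrw1 : Complex.I * (ω:ℂ) * ((φ x : ℝ) : ℂ) = ((ω * φ x : ℝ) : ℂ) * Complex.I := by
      push_cast; ring
    have hrw2 : Complex.I * (ω:ℂ) * ((φ x₀ + ⟪gradient φ x₀, x - x₀⟫_ℝ : ℝ) : ℂ)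
        = ((ω * (φ x₀ + ⟪gradient φ x₀, x - x₀⟫_ℝ) : ℝ) : ℂ) * Complex.I := by
      push_cast; ring
    rw [hrw1, hrw2]
    refine (abs_exp_I_sub_exp_I _ _).trans ?_
    rw [← mul_sub, abs_mul, _root_.abs_of_pos hω0]
    have hT := hTaylor x hxS
    rw [hnormx] at hT
    have heq2 : |φ x - (φ x₀ + ⟪gradient φ x₀, x - x₀⟫_ℝ)|
        = |φ x - φ x₀ - dφ x₀ (x - x₀)| := by
      rw [hinner (x - x₀)]; ring_nf
    gcongr
    rw [heq2]
    exact hT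
  -- real bounds
  have hα : |dA x s| ≤ C₁ := by
    have h1 : |dA x s| ≤ ‖dA x‖ := by
      have := (dA x).le_opNorm s
      simpa [hs, Real.norm_eq_abs] using this
    exact h1.trans (hC₁ x hxS)
  have haA : |A x - A x₀| ≤ C₁ * r := by
    have := hALip x hxS
    rwa [hnormx] at this
  have hdφnorm : ‖dφ x‖ ≤ η + C₃ * r := by
    have h1 : ‖dφ x‖ ≤ ‖dφ x₀‖ + ‖dφ x - dφ x₀‖ := by
      have := norm_add_le (dφ x₀) (dφ x - dφ x₀)
      simpa using this
    have h2 := hLip x hxS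
    rw [hnormx] at h2
    rw [hnormdφ] at h1
    linarith
  have hp : |dφ x s| ≤ η + C₃ * r := by
    have h1 : |dφ x s| ≤ ‖dφ x‖ := by
      have := (dφ x).le_opNorm s
      simpa [hs, Real.norm_eq_abs] using this
    exact h1.trans hdφnorm
  have hpp : |dφ x s - dφ x₀ s| ≤ C₃ * r := by
    have h1 : |(dφ x - dφ x₀) s| ≤ ‖dφ x - dφ x₀‖ := by
      have := (dφ x - dφ x₀).le_opNorm s
      simpa [hs, Real.norm_eq_abs] using this
    have h2 := hLip x hxS
    rw [hnormx] at h2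
    simpa [ContinuousLinearMap.sub_apply] using h1.trans h2
  have hp₀ : |dφ x₀ s| ≤ η := by
    have h1 : |dφ x₀ s| ≤ ‖dφ x₀‖ := by
      have := (dφ x₀).le_opNorm s
      simpa [hs, Real.norm_eq_abs] using this
    rwa [hnormdφ] at h1
  have hA₀b : |A x₀| ≤ C₂ := hC₂ x₀ hx₀S
  set E₁ := Complex.exp (Complex.I * (ω:ℂ) * (φ x : ℂ)) with hE₁def
  set E₂ := Complex.exp (Complex.I * (ω:ℂ) *
    ((φ x₀ + ⟪gradient φ x₀, x - x₀⟫_ℝ : ℝ) : ℂ)) with hE₂def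
  have hωℂ : (ω:ℂ) ≠ 0 := by exact_mod_cast hω0.ne'
  have hηℂ : ((η:ℝ):ℂ) ≠ 0 := by exact_mod_cast hη.ne'
  have key : (1 / (Complex.I * (ω:ℂ) * ((η:ℝ) : ℂ))) *
        ((((((A x : ℝ) : ℂ) • (E₁ • ((Complex.I * (ω:ℂ)) • (Complex.ofRealCLM.comp (dφ x))))
          + E₁ • (Complex.ofRealCLM.comp (dA x)))
         - (((A x₀ : ℝ) : ℂ) • (E₂ • ((Complex.I * (ω:ℂ)) •
              (Complex.ofRealCLM.comp (innerSL ℝ (gradient φ x₀))))))) : _ →L[ℝ] ℂ) s)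
      + (((A x : ℝ) : ℂ) * E₁ - ((A x₀ : ℝ) : ℂ) * E₂)
      = (1 / (Complex.I * (ω:ℂ) * ((η:ℝ) : ℂ))) * ((dA x s : ℝ) : ℂ) * E₁
        + ((A x - A x₀ : ℝ) : ℂ) * ((dφ x s : ℝ) : ℂ) * E₁ / ((η:ℝ) : ℂ)
        + ((A x₀ : ℝ) : ℂ) * ((dφ x s - dφ x₀ s : ℝ) : ℂ) * E₁ / ((η:ℝ) : ℂ)
        + ((A x₀ : ℝ) : ℂ) * ((dφ x₀ s : ℝ) : ℂ) * (E₁ - E₂) / ((η:ℝ) : ℂ)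
        + ((A x - A x₀ : ℝ) : ℂ) * E₁
        + ((A x₀ : ℝ) : ℂ) * (E₁ - E₂) := by
    simp only [ContinuousLinearMap.sub_apply, ContinuousLinearMap.add_apply,
      ContinuousLinearMap.smul_apply, ContinuousLinearMap.coe_comp', Function.comp_apply,
      Complex.ofRealCLM_apply, innerSL_apply_apply, smul_eq_mul]
    rw [hinner s]
    have hqrw : (1 : ℂ)/(Complex.I * (ω:ℂ) * ((η:ℝ):ℂ))
        = (-Complex.I) * ((ω:ℂ))⁻¹ * (((η:ℝ):ℂ))⁻¹ := by
      rw [one_div, mul_inv, mul_inv, Complex.inv_I]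
    rw [hqrw]
    push_cast
    field_simp [hωℂ, hηℂ]
    ring_nf
    simp only [Complex.I_sq]
    field_simp [hωℂ, hηℂ]
    ring
  rw [key]
  have tri : ∀ a b c e f g : ℂ, ‖a + b + c + e + f + g‖
      ≤ ‖a‖ + ‖b‖ + ‖c‖ + ‖e‖
        + ‖f‖ + ‖g‖ := by
    intro a b c e f g
    have h1 := norm_add_le (a + b + c + e + f) g
    have h2 := norm_add_le (a + b + c + e) f
    have h3 := norm_add_le (a + b + c) e
    have h4 := norm_add_le (a + b) c
    have h5 := norm_add_le a b
    linarith
  refine lt_of_le_of_lt (tri _ _ _ _ _ _) ?_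
  have habsη : ‖((η:ℝ):ℂ)‖ = η := by
    rw [norm_ofReal_eq_abs', _root_.abs_of_pos hη]
  have b1 : ‖(1 / (Complex.I * (ω:ℂ) * ((η:ℝ) : ℂ))) * ((dA x s : ℝ) : ℂ) * E₁‖
      ≤ 1 / (ω * η) * C₁ := by
    rw [norm_mul, norm_mul, habsq, hE₁, norm_ofReal_eq_abs', mul_one]
    have hpos : (0:ℝ) ≤ 1 / (ω * η) := by positivity
    exact mul_le_mul_of_nonneg_left hα hpos
  have b2 : ‖((A x - A x₀ : ℝ) : ℂ) * ((dφ x s : ℝ) : ℂ) * E₁ / ((η:ℝ) : ℂ)‖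
      ≤ C₁ * r * (η + C₃ * r) / η := by
    rw [norm_div, norm_mul, norm_mul, habsη, hE₁, norm_ofReal_eq_abs', norm_ofReal_eq_abs', mul_one]
    have h := mul_le_mul haA hp (abs_nonneg _) (le_trans (abs_nonneg _) haA)
    exact div_le_div_of_nonneg_right h hη.le |>.trans_eq rfl
  have b3 : ‖((A x₀ : ℝ) : ℂ) * ((dφ x s - dφ x₀ s : ℝ) : ℂ) * E₁ / ((η:ℝ) : ℂ)‖
      ≤ C₂ * (C₃ * r) / η := by
    rw [norm_div, norm_mul, norm_mul, habsη, hE₁, norm_ofReal_eq_abs', norm_ofReal_eq_abs', mul_one]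
    have h := mul_le_mul hA₀b hpp (abs_nonneg _) hC₂0
    exact div_le_div_of_nonneg_right h hη.le
  have b4 : ‖((A x₀ : ℝ) : ℂ) * ((dφ x₀ s : ℝ) : ℂ) * (E₁ - E₂) / ((η:ℝ) : ℂ)‖
      ≤ C₂ * η * (ω * (C₃ / 2 * r ^ 2)) / η := by
    rw [norm_div, norm_mul, norm_mul, habsη, norm_ofReal_eq_abs', norm_ofReal_eq_abs']
    have h1 : |A x₀| * |dφ x₀ s| ≤ C₂ * η :=
      mul_le_mul hA₀b hp₀ (abs_nonneg _) hC₂0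
    have h := mul_le_mul h1 hE12 (norm_nonneg _)
      (mul_nonneg hC₂0 hη.le)
    exact div_le_div_of_nonneg_right h hη.le
  have b5 : ‖((A x - A x₀ : ℝ) : ℂ) * E₁‖ ≤ C₁ * r := by
    rw [norm_mul, hE₁, norm_ofReal_eq_abs', mul_one]
    exact haA
  have b6 : ‖((A x₀ : ℝ) : ℂ) * (E₁ - E₂)‖ ≤ C₂ * (ω * (C₃ / 2 * r ^ 2)) := by
    rw [norm_mul, norm_ofReal_eq_abs']
    exact mul_le_mul hA₀b hE12 (norm_nonneg _) hC₂0
  -- numeric conclusion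
  have hηcancel : C₂ * η * (ω * (C₃ / 2 * r ^ 2)) / η = C₂ * (ω * (C₃ / 2 * r ^ 2)) := by
    field_simp
  have e1 : ω * r ^ 2 = Cε ^ 2 := by
    rw [hrdef, mul_pow, hw2]
    field_simp
  have hquad : C₂ * (ω * (C₃ / 2 * r ^ 2)) = C₂ * C₃ / 2 * Cε ^ 2 := by
    have h : ω * (C₃ / 2 * r ^ 2) = C₃ / 2 * (ω * r ^ 2) := by ring
    rw [h, e1]; ring
  have t1 : 1 / (ω * η) * C₁ ≤ C₁ / η * w := by
    have heq : 1 / (ω * η) * C₁ = C₁ / η * ω⁻¹ := by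
      field_simp
    rw [heq]
    have hpos : (0:ℝ) ≤ C₁ / η := by positivity
    exact mul_le_mul_of_nonneg_left hinvw hpos
  have t2 : C₁ * r * (η + C₃ * r) / η ≤ C₁ * Cε * (η + C₃ * Cε) / η * w := by
    rw [hrdef, div_mul_eq_mul_div]
    apply div_le_div_of_nonneg_right ?_ hη.le
    have hww : w * w ≤ w := mul_le_of_le_one_left hw0.le hw1
    have h2 : C₁ * Cε * C₃ * Cε * (w * w) ≤ C₁ * Cε * C₃ * Cε * w :=
      mul_le_mul_of_nonneg_left hww (by positivity)
    have expand1 : C₁ * (Cε * w) * (η + C₃ * (Cε * w))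
        = C₁ * Cε * w * η + C₁ * Cε * C₃ * Cε * (w * w) := by ring
    have expand2 : C₁ * Cε * (η + C₃ * Cε) * w
        = C₁ * Cε * w * η + C₁ * Cε * C₃ * Cε * w := by ring
    rw [expand1, expand2]
    exact add_le_add_right h2 _
  have t3 : C₂ * (C₃ * r) / η = C₂ * C₃ * Cε / η * w := by rw [hrdef]; ring
  have t5 : C₁ * r = C₁ * Cε * w := by rw [hrdef]; ring
  have hsqrt : K / gap < Real.sqrt ω := by
    have h1 : (K / gap) ^ 2 < ω := by
      have := le_trans (le_max_right 1 ((K / gap) ^ 2 + 1)) hω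
      linarith
    have h2 : Real.sqrt ((K / gap) ^ 2) < Real.sqrt ω := Real.sqrt_lt_sqrt (sq_nonneg _) h1
    rwa [Real.sqrt_sq (div_nonneg hK0 hgap0.le)] at h2
  have hKw : K * w < gap := by
    have hsq0 : 0 < Real.sqrt ω := Real.sqrt_pos.mpr hω0
    have hwsqrt : w = (Real.sqrt ω)⁻¹ := by
      rw [hwdef, Real.sqrt_eq_rpow, ← Real.rpow_neg hω0.le]
    rw [hwsqrt, ← div_eq_mul_inv, div_lt_iff₀ hsq0]
    have h := (div_lt_iff₀ hgap0).mp hsqrt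
    linarith
  calc ‖(1 / (Complex.I * (ω:ℂ) * ((η:ℝ) : ℂ))) * ((dA x s : ℝ) : ℂ) * E₁‖
        + ‖((A x - A x₀ : ℝ) : ℂ) * ((dφ x s : ℝ) : ℂ) * E₁ / ((η:ℝ) : ℂ)‖
        + ‖((A x₀ : ℝ) : ℂ) * ((dφ x s - dφ x₀ s : ℝ) : ℂ) * E₁ / ((η:ℝ) : ℂ)‖
        + ‖((A x₀ : ℝ) : ℂ) * ((dφ x₀ s : ℝ) : ℂ) * (E₁ - E₂) / ((η:ℝ) : ℂ)‖
        + ‖((A x - A x₀ : ℝ) : ℂ) * E₁‖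
        + ‖((A x₀ : ℝ) : ℂ) * (E₁ - E₂)‖
      ≤ 1 / (ω * η) * C₁ + C₁ * r * (η + C₃ * r) / η + C₂ * (C₃ * r) / η
        + C₂ * η * (ω * (C₃ / 2 * r ^ 2)) / η + C₁ * r + C₂ * (ω * (C₃ / 2 * r ^ 2)) :=
      add_le_add (add_le_add (add_le_add (add_le_add (add_le_add b1 b2) b3) b4) b5) b6
    _ ≤ C₁ / η * w + C₁ * Cε * (η + C₃ * Cε) / η * w + C₂ * C₃ * Cε / η * w
        + C₂ * C₃ / 2 * Cε ^ 2 + C₁ * Cε * w + C₂ * C₃ / 2 * Cε ^ 2 :=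
      add_le_add (add_le_add (add_le_add (add_le_add (add_le_add t1 t2) (le_of_eq t3))
        (le_of_eq (hηcancel.trans hquad))) (le_of_eq t5)) (le_of_eq hquad)
    _ = K * w + Cε ^ 2 * C₂ * C₃ := by rw [hKdef]; ring
    _ < gap + Cε ^ 2 * C₂ * C₃ := by linarith
    _ = |A x₀| / 4 := by rw [hgapdef]; ring
end
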